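/- (Edge orientations at X under the Extended Y-Structure conditions.) Let G be a directed mixed graph whose node set is exactly {V, W, X, Y} ∪ 𝐒, where V, W, X, Y are four distinct nodes and 𝐒 is a (possibly empty) set of selection nodes disjoint from {V, W, X, Y}. Suppose the following σ-separation statements hold in G: V ⊥ Y | {X} ∪ 𝐒, V ⊥̸ Y | 𝐒, V ⊥̸ W | {X} ∪ 𝐒, and V ⊥ W | 𝐒. Then X ∉ an({V, W} ∪ 𝐒), every edge of G between X and a node of {V, W} ∪ 𝐒 has an arrowhead at X (it is a directed edge into X or a bidirected edge), the directed edge Y → X is not in G, and the bidirected edge X ↔ Y is not in G. -/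

import Mathlib

/-- The three ways an edge of a directed mixed graph can occur on a walk,
when traversed from left to right: `fwd` is a directed edge pointing to the
right node, `bwd` is a directed edge pointing to the left node, and `bi` is
a bidirected edge. -/
inductive EdgeDir : Type
  | fwd
  | bwd
  | bi
  deriving DecidableEq

/-- The edge has an arrowhead at its right endpoint. -/
def EdgeDir.headAtRight (e : EdgeDir) : Prop := e = .fwd ∨ e = .bi

/-- The edge has an arrowhead at its left endpoint. -/
def EdgeDir.headAtLeft (e : EdgeDir) : Prop := e = .bwd ∨ e = .bi

/-- A directed mixed graph (DMG) on node type `α`: an irreflexive relation of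
directed edges and an irreflexive symmetric relation of bidirected edges. -/
structure DMG (α : Type*) where
  dir : α → α → Prop
  bidir : α → α → Prop
  dir_irrefl : ∀ x, ¬ dir x x
  bidir_irrefl : ∀ x, ¬ bidir x x
  bidir_symm : ∀ x y, bidir x y → bidir y x

namespace DMG

variable {α : Type*}

/-- `G.Anc x y`: there is a directed path (possibly of length zero) from `x` to `y`,
i.e. `x` is an ancestor of `y` (equivalently, `y` is a descendant of `x`). -/
def Anc (G : DMG α) (x y : α) : Prop := Relation.ReflTransGen G.dir x y

/-- Ancestors of a set of nodes. -/
def ancSet (G : DMG α) (S : Set α) : Set α := {x | ∃ y ∈ S, G.Anc x y}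

/-- The strongly connected component of `x`: all nodes that are both ancestors
and descendants of `x`. -/
def scc (G : DMG α) (x : α) : Set α := {y | G.Anc y x ∧ G.Anc x y}

/-- Validity of one step of a walk, from `a` to `b`, traversed as `e`. -/
def StepValid (G : DMG α) (a : α) (e : EdgeDir) (b : α) : Prop :=
  match e with
  | .fwd => G.dir a b
  | .bwd => G.dir b a
  | .bi => G.bidir a b

/-- A walk from `x` to `y` in a DMG `G`: an alternating sequence of `n + 1` nodes
and `n` edges of `G`. -/
structure Walk (G : DMG α) (x y : α) where
  n : ℕ
  node : Fin (n + 1) → α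
  edge : Fin n → EdgeDir
  first_eq : node 0 = x
  last_eq : node (Fin.last n) = y
  valid : ∀ i : Fin n, G.StepValid (node i.castSucc) (edge i) (node i.succ)

namespace Walk

variable {G : DMG α} {x y : α}

/-- A path is a walk all of whose nodes are distinct. -/
def IsPath (w : Walk G x y) : Prop := Function.Injective w.node

/-- The interior node at position `i + 1` of the walk is a collider: both
adjacent edges have an arrowhead at it. -/
def IsColliderAt (w : Walk G x y) (i : ℕ) (h : i + 1 < w.n) : Prop :=
  (w.edge ⟨i, by omega⟩).headAtRight ∧ (w.edge ⟨i + 1, h⟩).headAtLeft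

/-- The walk is σ-blocked by the conditioning set `C`. -/
def Blocked (w : Walk G x y) (C : Set α) : Prop :=
  x ∈ C ∨ y ∈ C ∨
  (∃ (i : ℕ) (h : i + 1 < w.n), w.IsColliderAt i h ∧
    w.node ⟨i + 1, by omega⟩ ∉ G.ancSet C) ∨
  (∃ (i : ℕ) (h : i + 1 < w.n), ¬ w.IsColliderAt i h ∧
    w.node ⟨i + 1, by omega⟩ ∈ C ∧
    ((w.edge ⟨i, by omega⟩ = .bwd ∧
        w.node ⟨i, by omega⟩ ∉ G.scc (w.node ⟨i + 1, by omega⟩)) ∨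
     (w.edge ⟨i + 1, h⟩ = .fwd ∧
        w.node ⟨i + 2, by omega⟩ ∉ G.scc (w.node ⟨i + 1, by omega⟩))))

end Walk

/-- σ-separation: every path between `x` and `y` is σ-blocked by `C`. -/
def sigmaSep (G : DMG α) (x y : α) (C : Set α) : Prop :=
  ∀ w : Walk G x y, w.IsPath → w.Blocked C

/-- A confounding path between `x` and `y`: a path of nonzero length whose first
edge has an arrowhead at `x`, whose last edge has an arrowhead at `y`, and all of
whose non-endpoint nodes are non-colliders. -/
def IsConfoundingPath {G : DMG α} {x y : α} (w : Walk G x y) : Prop :=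
  w.IsPath ∧ ∃ h : 0 < w.n,
    (w.edge ⟨0, h⟩).headAtLeft ∧ (w.edge ⟨w.n - 1, by omega⟩).headAtRight ∧
    ∀ (i : ℕ) (hi : i + 1 < w.n), ¬ w.IsColliderAt i hi

/-- `x` and `y` are confounded in `G` if some confounding path connects them. -/
def Confounded (G : DMG α) (x y : α) : Prop := ∃ w : Walk G x y, IsConfoundingPath w

/-- A directed path from `x` to `y` (of length at least one) all of whose
intermediate nodes avoid `M`. -/
def DirPathAvoiding (G : DMG α) (M : Set α) (x y : α) : Prop :=
  ∃ l : List α, List.Chain G.dir x (l ++ [y]) ∧ ∀ v ∈ l, v ∉ M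

/-- A path between `x` and `y` with an arrowhead at `x` and an arrowhead at `y`,
all of whose intermediate nodes lie outside `M` and are non-colliders. -/
def BidirPathAvoiding (G : DMG α) (M : Set α) (x y : α) : Prop :=
  ∃ w : Walk G x y, w.IsPath ∧ (∃ h : 0 < w.n,
    (w.edge ⟨0, h⟩).headAtLeft ∧ (w.edge ⟨w.n - 1, by omega⟩).headAtRight) ∧
    ∀ (i : ℕ) (hi : i + 1 < w.n),
      w.node ⟨i + 1, by omega⟩ ∉ M ∧ ¬ w.IsColliderAt i hi

/-- The latent projection of `G` onto the node set `M`. -/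
def latentProj (G : DMG α) (M : Set α) : DMG M where
  dir a b := a.1 ≠ b.1 ∧ DirPathAvoiding G M a.1 b.1
  bidir a b := a.1 ≠ b.1 ∧
    (BidirPathAvoiding G M a.1 b.1 ∨ BidirPathAvoiding G M b.1 a.1)
  dir_irrefl := fun _a h => h.1 rfl
  bidir_irrefl := fun _a h => h.1 rfl
  bidir_symm := fun _a _b h => ⟨Ne.symm h.1, Or.symm h.2⟩

end DMG

namespace DMG

variable {α : Type*} {G : DMG α}

lemma anc_refl (G : DMG α) (x : α) : G.Anc x x := Relation.ReflTransGen.refl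

lemma Anc.trans {x y z : α} (h : G.Anc x y) (h' : G.Anc y z) : G.Anc x z :=
  Relation.ReflTransGen.trans h h'

lemma anc_of_dir {x y : α} (h : G.dir x y) : G.Anc x y :=
  Relation.ReflTransGen.single h

lemma mem_ancSet_self {C : Set α} {x : α} (h : x ∈ C) : x ∈ G.ancSet C :=
  ⟨x, h, anc_refl G x⟩

lemma mem_ancSet_of_anc {C : Set α} {x y : α} (h : G.Anc x y) (hy : y ∈ G.ancSet C) :
    x ∈ G.ancSet C := by
  obtain ⟨c, hc, hyc⟩ := hy
  exact ⟨c, hc, h.trans hyc⟩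

lemma chain_anc {a : α} : ∀ {l : List α}, List.Chain G.dir a l → ∀ x ∈ l, G.Anc a x := by
  intro l
  induction l generalizing a with
  | nil => intro _ x hx; simp at hx
  | cons b t ih =>
    intro h x hx
    rcases List.chain_cons.mp h with ⟨hab, ht⟩
    rcases List.mem_cons.mp hx with rfl | hx
    · exact anc_of_dir hab
    · exact (anc_of_dir hab).trans (ih ht x hx)

lemma getLast_inner {c a : α} (s t : List α) :
    (c :: (s ++ a :: t)).getLast (by simp) = (a :: t).getLast (by simp) := by
  simpa using List.getLast_append' (c :: s) (a :: t) (by simp)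

lemma exists_nodup_chain {b : α} : ∀ {a : α}, G.Anc a b →
    ∃ l : List α, List.Chain G.dir a l ∧ (a :: l).getLast (by simp) = b ∧ (a :: l).Nodup := by
  intro a h
  induction h using Relation.ReflTransGen.head_induction_on with
  | refl => exact ⟨[], List.Chain.nil, rfl, List.nodup_singleton b⟩
  | head hac hcb ih =>
    rename_i u v
    obtain ⟨l, hl, hlast, hnd⟩ := ih
    by_cases hmem : u ∈ v :: l
    · rcases List.mem_cons.mp hmem with rfl | hmem
      · exact ⟨l, hl, hlast, hnd⟩
      · obtain ⟨s, t, rfl⟩ := List.append_of_mem hmem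
        refine ⟨t, (List.isChain_cons_split.mp hl).2, ?_, ?_⟩
        · rw [← hlast]; exact (getLast_inner s t).symm
        · have hsub : List.Sublist (u :: t) (v :: (s ++ u :: t)) :=
            List.Sublist.cons _ (List.sublist_append_right s (u :: t))
          exact hnd.sublist hsub
    · refine ⟨v :: l, List.chain_cons.mpr ⟨hac, hl⟩, ?_, List.nodup_cons.mpr ⟨hmem, hnd⟩⟩
      rw [← hlast]
      exact List.getLast_cons (by simp)

lemma exists_fwd_path {a b : α} (h : G.Anc a b) (hab : a ≠ b) :
    ∃ t : G.Walk a b, t.IsPath ∧ 0 < t.n ∧ (∀ i, t.edge i = .fwd) ∧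
      ∀ m, G.Anc a (t.node m) := by
  classical
  obtain ⟨l, hl, hlast, hnd⟩ := exists_nodup_chain h
  have hne : l ≠ [] := by
    rintro rfl
    simp at hlast
    exact hab hlast
  have hlen : 0 < l.length := List.length_pos_of_ne_nil hne
  have hget := List.isChain_iff_getElem.mp hl
  have hg0 : G.dir a (l[0]'hlen) := by
    exact hget 0 (by simp; omega)
  have hgi : ∀ k (hk : k < l.length - 1), G.dir (l[k]'(by omega)) (l[k+1]'(by omega)) := by
    intro k hk
    exact hget (k + 1) (by simp; omega)
  have hD : ∀ (k : ℕ) (hk : k < l.length + 1), (a :: l).getD k a = (a :: l)[k]'(by simp; omega) :=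
    fun k hk => List.getD_eq_getElem _ _ (by simp; omega)
  refine ⟨⟨l.length, fun i => (a :: l).getD i.1 a, fun _ => .fwd, rfl, ?_, ?_⟩,
    ?_, hlen, fun _ => rfl, ?_⟩
  · -- last_eq
    show (a :: l).getD l.length a = b
    rw [hD l.length (by omega), ← hlast, List.getLast_eq_getElem]
    congr 1
  · -- valid
    intro i
    show G.dir ((a :: l).getD i.1 a) ((a :: l).getD (i.1 + 1) a)
    have h2 := i.2
    rw [hD i.1 (by omega), hD (i.1 + 1) (by omega), List.getElem_cons_succ]
    rcases Nat.eq_zero_or_pos i.1 with h0 | hpos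
    · have e : (a :: l)[i.1]'(by simp only [List.length_cons]; omega) = a := by
        simp only [h0]
        rfl
      rw [e]
      have e2 : l[i.1]'(by omega) = l[0]'hlen := by congr 1
      rw [e2]
      exact hg0
    · have e : (a :: l)[i.1]'(by simp only [List.length_cons]; omega) =
          (a :: l)[(i.1 - 1) + 1]'(by simp only [List.length_cons]; omega) := by
        congr 1
        omega
      rw [e, List.getElem_cons_succ]
      have := hgi (i.1 - 1) (by omega)
      have e2 : l[(i.1 - 1) + 1]'(by omega) = l[i.1]'(by omega) := by congr 1; omega
      rw [e2] at this
      have e3 : l[i.1 - 1]'(by omega) = l[i.1 - 1]'(by omega) := rfl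
      exact this
  · -- IsPath
    intro i j hij
    have hinj := List.nodup_iff_injective_getElem.mp hnd
    have hi2 : i.1 < (a :: l).length := by have := i.2; simpa using this
    have hj2 : j.1 < (a :: l).length := by have := j.2; simpa using this
    have heq : ((a :: l)[i.1]'hi2) = ((a :: l)[j.1]'hj2) := by
      rw [← hD i.1 (by simpa using hi2), ← hD j.1 (by simpa using hj2)]
      exact hij
    have := hinj (a₁ := ⟨i.1, hi2⟩) (a₂ := ⟨j.1, hj2⟩) heq
    exact Fin.ext (congrArg Fin.val this)
  · -- Anc
    intro m
    show G.Anc a ((a :: l).getD m.1 a)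
    have hm2 : m.1 < l.length + 1 := m.2
    rw [hD m.1 hm2]
    have hmem : (a :: l)[m.1]'(by simp; omega) ∈ a :: l := List.getElem_mem _
    rcases List.mem_cons.mp hmem with he | hm
    · rw [he]
      exact anc_refl G a
    · exact chain_anc hl _ hm

variable {v w : α}

/-- Splice: prefix of `p` up to position `j`, followed by walk `t`. -/
def spliceF (p : G.Walk v w) (j : ℕ) (hj : j ≤ p.n)
    (t : G.Walk (p.node ⟨j, by omega⟩) w) : G.Walk v w where
  n := j + t.n
  node m := if h : m.1 < j then p.node ⟨m.1, by omega⟩ else t.node ⟨m.1 - j, by have := m.2; omega⟩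
  edge i := if h : i.1 < j then p.edge ⟨i.1, by omega⟩ else t.edge ⟨i.1 - j, by have := i.2; omega⟩
  first_eq := by
    by_cases h : 0 < j
    · rw [dif_pos (show ((0 : Fin (j + t.n + 1)) : ℕ) < j from h)]
      exact p.first_eq
    · rw [dif_neg (show ¬ ((0 : Fin (j + t.n + 1)) : ℕ) < j from h)]
      simp only [Fin.val_zero]
      have hj0 : j = 0 := by omega
      have h2 := t.first_eq
      have e : (⟨0 - j, by omega⟩ : Fin (t.n + 1)) = 0 := by ext; simp
      rw [e, h2]
      subst hj0
      exact p.first_eq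
  last_eq := by
    have hne : ¬ (j + t.n < j) := by omega
    simp only [Fin.last, dif_neg hne]
    have : j + t.n - j = t.n := by omega
    have e : (⟨j + t.n - j, by omega⟩ : Fin (t.n + 1)) = Fin.last t.n := by
      ext; simp [this]
    rw [e]
    exact t.last_eq
  valid := by
    intro i
    by_cases h : i.1 < j
    · simp only [Fin.coe_castSucc, Fin.val_succ, dif_pos h]
      by_cases h2 : i.1 + 1 < j
      · simp only [dif_pos h2]
        have := p.valid ⟨i.1, by omega⟩
        exact this
      · simp only [dif_neg h2]
        have hij : i.1 + 1 = j := by omega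
        have e : (⟨i.1 + 1 - j, by have := i.2; omega⟩ : Fin (t.n + 1)) = ⟨0, by omega⟩ := by
          ext; simp; omega
        rw [e]
        have e2 : t.node ⟨0, by omega⟩ = p.node ⟨j, by omega⟩ := t.first_eq
        rw [e2]
        have := p.valid ⟨i.1, by omega⟩
        convert this using 2 <;>
          · ext
            simp only [Fin.coe_castSucc, Fin.val_succ, Fin.val_mk] <;> omega
    · have h1 : ¬ (i.1 + 1 < j) := by omega
      simp only [Fin.coe_castSucc, Fin.val_succ, dif_neg h, dif_neg h1]
      have := t.valid ⟨i.1 - j, by have := i.2; omega⟩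
      have e1 : (⟨i.1 + 1 - j, by have := i.2; omega⟩ : Fin (t.n + 1))
          = ⟨(i.1 - j) + 1, by have := i.2; omega⟩ := by ext; simp; omega
      rw [e1]
      exact this

lemma spliceF_n (p : G.Walk v w) (j : ℕ) (hj : j ≤ p.n) (t : G.Walk (p.node ⟨j, by omega⟩) w) :
    (spliceF p j hj t).n = j + t.n := rfl

lemma spliceF_node_lt (p : G.Walk v w) (j : ℕ) (hj : j ≤ p.n)
    (t : G.Walk (p.node ⟨j, by omega⟩) w) (m : ℕ) (hm : m < j) (hm2 : m < j + t.n + 1) :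
    (spliceF p j hj t).node ⟨m, hm2⟩ = p.node ⟨m, by omega⟩ := dif_pos hm

lemma spliceF_node_ge (p : G.Walk v w) (j : ℕ) (hj : j ≤ p.n)
    (t : G.Walk (p.node ⟨j, by omega⟩) w) (m : ℕ) (hm : ¬ (m < j)) (hm2 : m < j + t.n + 1) :
    (spliceF p j hj t).node ⟨m, hm2⟩ = t.node ⟨m - j, by omega⟩ := dif_neg hm

lemma spliceF_edge_lt (p : G.Walk v w) (j : ℕ) (hj : j ≤ p.n)
    (t : G.Walk (p.node ⟨j, by omega⟩) w) (m : ℕ) (hm : m < j) (hm2 : m < j + t.n) :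
    (spliceF p j hj t).edge ⟨m, hm2⟩ = p.edge ⟨m, by omega⟩ := dif_pos hm

lemma spliceF_edge_ge (p : G.Walk v w) (j : ℕ) (hj : j ≤ p.n)
    (t : G.Walk (p.node ⟨j, by omega⟩) w) (m : ℕ) (hm : ¬ (m < j)) (hm2 : m < j + t.n) :
    (spliceF p j hj t).edge ⟨m, hm2⟩ = t.edge ⟨m - j, by omega⟩ := dif_neg hm

lemma spliceF_node_le (p : G.Walk v w) (j : ℕ) (hj : j ≤ p.n)
    (t : G.Walk (p.node ⟨j, by omega⟩) w) (m : ℕ) (hm : m ≤ j) (hm2 : m < j + t.n + 1) :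
    (spliceF p j hj t).node ⟨m, hm2⟩ = p.node ⟨m, by omega⟩ := by
  rcases Nat.lt_or_ge m j with h | h
  · exact spliceF_node_lt p j hj t m h hm2
  · have hmj : m = j := by omega
    rw [spliceF_node_ge p j hj t m (by omega) hm2]
    have e : (⟨m - j, by omega⟩ : Fin (t.n + 1)) = 0 := by ext; simp; omega
    rw [e, t.first_eq]
    exact congrArg p.node (by ext; simp [hmj])

lemma spliceF_open {C : Set α} (p : G.Walk v w) (hp : p.IsPath)
    (hv : v ∉ C) (hw : w ∉ C) (j : ℕ) (hj : j ≤ p.n)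
    (t : G.Walk (p.node ⟨j, by omega⟩) w) (ht : t.IsPath)
    (hfwd : ∀ i, t.edge i = .fwd)
    (htC : ∀ m, t.node m ∉ C)
    (hcross : ∀ (m : ℕ) (hm : m < j), ∀ m', p.node ⟨m, by omega⟩ ≠ t.node m')
    (hcol : ∀ (i : ℕ) (h : i + 1 < p.n), i + 1 < j →
      p.IsColliderAt i h → p.node ⟨i + 1, by omega⟩ ∈ G.ancSet C)
    (hnc : ∀ (i : ℕ) (h : i + 1 < p.n), i + 1 < j → ¬ p.IsColliderAt i h →
      p.node ⟨i + 1, by omega⟩ ∈ C →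
      ¬((p.edge ⟨i, by omega⟩ = .bwd ∧ p.node ⟨i, by omega⟩ ∉ G.scc (p.node ⟨i+1, by omega⟩)) ∨
        (p.edge ⟨i+1, h⟩ = .fwd ∧
          p.node ⟨i+2, by omega⟩ ∉ G.scc (p.node ⟨i+1, by omega⟩)))) :
    ¬ G.sigmaSep v w C := by
  intro hsep
  set r := spliceF p j hj t with hr
  have hrn : r.n = j + t.n := rfl
  have hrP : r.IsPath := by
    intro m1 m2 hnode
    have hm1 : m1.1 < j + t.n + 1 := m1.2
    have hm2 : m2.1 < j + t.n + 1 := m2.2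
    rcases Nat.lt_or_ge m1.1 j with b1 | b1 <;> rcases Nat.lt_or_ge m2.1 j with b2 | b2
    · have e1 : r.node m1 = p.node ⟨m1.1, by omega⟩ := spliceF_node_lt p j hj t m1.1 b1 hm1
      have e2 : r.node m2 = p.node ⟨m2.1, by omega⟩ := spliceF_node_lt p j hj t m2.1 b2 hm2
      rw [e1, e2] at hnode
      have hpp := hp hnode
      rw [Fin.mk.injEq] at hpp
      exact Fin.ext hpp
    · have e1 : r.node m1 = p.node ⟨m1.1, by omega⟩ := spliceF_node_lt p j hj t m1.1 b1 hm1
      have e2 : r.node m2 = t.node ⟨m2.1 - j, by omega⟩ :=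
        spliceF_node_ge p j hj t m2.1 (by omega) hm2
      rw [e1, e2] at hnode
      exact absurd hnode (hcross m1.1 b1 _)
    · have e1 : r.node m1 = t.node ⟨m1.1 - j, by omega⟩ :=
        spliceF_node_ge p j hj t m1.1 (by omega) hm1
      have e2 : r.node m2 = p.node ⟨m2.1, by omega⟩ := spliceF_node_lt p j hj t m2.1 b2 hm2
      rw [e1, e2] at hnode
      exact absurd hnode.symm (hcross m2.1 b2 _)
    · have e1 : r.node m1 = t.node ⟨m1.1 - j, by omega⟩ :=
        spliceF_node_ge p j hj t m1.1 (by omega) hm1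
      have e2 : r.node m2 = t.node ⟨m2.1 - j, by omega⟩ :=
        spliceF_node_ge p j hj t m2.1 (by omega) hm2
      rw [e1, e2] at hnode
      have hft := ht hnode
      rw [Fin.mk.injEq] at hft
      exact Fin.ext (by omega)
  have hbl := hsep r hrP
  rcases hbl with hv' | hw' | ⟨i, h, hcolr, hanc⟩ | ⟨i, h, hncol, hmem, hdisj⟩
  · exact hv hv'
  · exact hw hw'
  · -- collider case
    have h' : i + 1 < j + t.n := h
    rcases Nat.lt_or_ge (i + 1) j with hlt | hge
    · -- collider in the p part
      have hPcol : p.IsColliderAt i (by omega) := by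
        obtain ⟨c1, c2⟩ := hcolr
        have e1 : r.edge ⟨i, by omega⟩ = p.edge ⟨i, by omega⟩ :=
          spliceF_edge_lt p j hj t i (by omega) (by omega)
        have e2 : r.edge ⟨i + 1, h⟩ = p.edge ⟨i + 1, by omega⟩ :=
          spliceF_edge_lt p j hj t (i + 1) (by omega) (by omega)
        rw [e1] at c1
        rw [e2] at c2
        exact ⟨c1, c2⟩
      have hin := hcol i (by omega) hlt hPcol
      have e3 : r.node ⟨i + 1, by omega⟩ = p.node ⟨i + 1, by omega⟩ :=
        spliceF_node_le p j hj t (i + 1) (by omega) (by omega)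
      rw [e3] at hanc
      exact hanc hin
    · -- arrowhead would have to be at left end of a fwd edge
      obtain ⟨_, c2⟩ := hcolr
      have e2 : r.edge ⟨i + 1, h⟩ = t.edge ⟨i + 1 - j, by omega⟩ :=
        spliceF_edge_ge p j hj t (i + 1) (by omega) (by omega)
      rw [e2, hfwd] at c2
      rcases c2 with c2 | c2 <;> exact EdgeDir.noConfusion c2
  · -- non-collider case
    have h' : i + 1 < j + t.n := h
    rcases Nat.lt_or_ge (i + 1) j with hlt | hge
    · -- in the p part: transfer to hnc
      have e0 : r.node ⟨i, by omega⟩ = p.node ⟨i, by omega⟩ :=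
        spliceF_node_le p j hj t i (by omega) (by omega)
      have e1 : r.node ⟨i + 1, by omega⟩ = p.node ⟨i + 1, by omega⟩ :=
        spliceF_node_le p j hj t (i + 1) (by omega) (by omega)
      have e2 : r.node ⟨i + 2, by omega⟩ = p.node ⟨i + 2, by omega⟩ :=
        spliceF_node_le p j hj t (i + 2) (by omega) (by omega)
      have f1 : r.edge ⟨i, by omega⟩ = p.edge ⟨i, by omega⟩ :=
        spliceF_edge_lt p j hj t i (by omega) (by omega)
      have f2 : r.edge ⟨i + 1, h⟩ = p.edge ⟨i + 1, by omega⟩ :=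
        spliceF_edge_lt p j hj t (i + 1) (by omega) (by omega)
      have hPncol : ¬ p.IsColliderAt i (by omega) := by
        intro hc
        apply hncol
        obtain ⟨c1, c2⟩ := hc
        exact ⟨by rw [f1]; exact c1, by rw [f2]; exact c2⟩
      rw [e1] at hmem
      refine hnc i (by omega) hlt hPncol hmem ?_
      rcases hdisj with ⟨hd1, hd2⟩ | ⟨hd1, hd2⟩
      · rw [f1] at hd1
        rw [e0, e1] at hd2
        exact Or.inl ⟨hd1, hd2⟩
      · rw [f2] at hd1
        rw [e2, e1] at hd2
        exact Or.inr ⟨hd1, hd2⟩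
    · -- in the t part: node is not in C
      have e1 : r.node ⟨i + 1, by omega⟩ = t.node ⟨i + 1 - j, by omega⟩ :=
        spliceF_node_ge p j hj t (i + 1) (by omega) (by omega)
      rw [e1] at hmem
      exact htC _ hmem

/-- Backward splice: the reversal of the directed walk `t` (from `p.node j` to `v`),
followed by the suffix of `p` from position `j`. -/
def spliceB (p : G.Walk v w) (j : ℕ) (hj : j ≤ p.n)
    (t : G.Walk (p.node ⟨j, by omega⟩) v) (hfwd : ∀ i, t.edge i = EdgeDir.fwd) :
    G.Walk v w where
  n := t.n + (p.n - j)
  node m := if h : m.1 < t.n then t.node ⟨t.n - m.1, by omega⟩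
    else p.node ⟨j + (m.1 - t.n), by have := m.2; omega⟩
  edge i := if h : i.1 < t.n then EdgeDir.bwd
    else p.edge ⟨j + (i.1 - t.n), by have := i.2; omega⟩
  first_eq := by
    by_cases h : 0 < t.n
    · rw [dif_pos (show ((0 : Fin (t.n + (p.n - j) + 1)) : ℕ) < t.n from h)]
      simp only [Fin.val_zero]
      have e : (⟨t.n - 0, by omega⟩ : Fin (t.n + 1)) = Fin.last t.n := by ext; simp
      rw [e]
      exact t.last_eq
    · rw [dif_neg (show ¬ ((0 : Fin (t.n + (p.n - j) + 1)) : ℕ) < t.n from h)]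
      simp only [Fin.val_zero]
      have ht0 : t.n = 0 := by omega
      have e : p.node ⟨j + (0 - t.n), by omega⟩ = p.node ⟨j, by omega⟩ :=
        congrArg p.node (by ext; simp)
      rw [e, ← t.first_eq]
      have e2 : (0 : Fin (t.n + 1)) = Fin.last t.n := by ext; simp [ht0]
      rw [e2]
      exact t.last_eq
  last_eq := by
    have hne : ¬ (t.n + (p.n - j) < t.n) := by omega
    simp only [Fin.last, dif_neg hne]
    have e : p.node ⟨j + (t.n + (p.n - j) - t.n), by omega⟩ = p.node (Fin.last p.n) :=
      congrArg p.node (by ext; simp [Fin.last]; omega)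
    rw [e]
    exact p.last_eq
  valid := by
    intro i
    by_cases h : i.1 < t.n
    · simp only [Fin.coe_castSucc, Fin.val_succ, dif_pos h]
      have hk : t.n - i.1 - 1 < t.n := by omega
      have hvv := t.valid ⟨t.n - i.1 - 1, hk⟩
      rw [hfwd] at hvv
      have hv' : G.dir (t.node (⟨t.n - i.1 - 1, hk⟩ : Fin t.n).castSucc)
          (t.node (⟨t.n - i.1 - 1, hk⟩ : Fin t.n).succ) := hvv
      by_cases h2 : i.1 + 1 < t.n
      · simp only [dif_pos h2]
        show G.dir (t.node ⟨t.n - (i.1 + 1), by omega⟩) (t.node ⟨t.n - i.1, by omega⟩)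
        convert hv' using 2 <;>
          · ext
            simp only [Fin.coe_castSucc, Fin.val_succ, Fin.val_mk]
            omega
      · simp only [dif_neg h2]
        have hi1 : i.1 + 1 = t.n := by omega
        have e0 : t.node (⟨t.n - i.1 - 1, hk⟩ : Fin t.n).castSucc = t.node 0 :=
          congrArg t.node (by
            ext
            simp only [Fin.coe_castSucc, Fin.val_zero, Fin.val_mk]
            omega)
        rw [e0, t.first_eq] at hv'
        show G.dir (p.node ⟨j + (i.1 + 1 - t.n), by have := i.2; omega⟩)
          (t.node ⟨t.n - i.1, by omega⟩)
        have e : p.node ⟨j + (i.1 + 1 - t.n), by have := i.2; omega⟩ = p.node ⟨j, by omega⟩ :=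
          congrArg p.node (by ext; simp only [Fin.val_mk]; omega)
        rw [e]
        convert hv' using 2
        ext
        simp only [Fin.val_succ, Fin.val_mk]
        omega
    · have h1 : ¬ (i.1 + 1 < t.n) := by omega
      simp only [Fin.coe_castSucc, Fin.val_succ, dif_neg h, dif_neg h1]
      have hb : j + (i.1 - t.n) < p.n := by have := i.2; omega
      have hvv := p.valid ⟨j + (i.1 - t.n), hb⟩
      convert hvv using 2 <;>
        · ext
          simp only [Fin.coe_castSucc, Fin.val_succ, Fin.val_mk] <;>
          omega

lemma spliceB_n (p : G.Walk v w) (j : ℕ) (hj : j ≤ p.n)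
    (t : G.Walk (p.node ⟨j, by omega⟩) v) (hfwd : ∀ i, t.edge i = EdgeDir.fwd) :
    (spliceB p j hj t hfwd).n = t.n + (p.n - j) := rfl

lemma spliceB_node_lt (p : G.Walk v w) (j : ℕ) (hj : j ≤ p.n)
    (t : G.Walk (p.node ⟨j, by omega⟩) v) (hfwd : ∀ i, t.edge i = EdgeDir.fwd)
    (m : ℕ) (hm : m < t.n) (hm2 : m < t.n + (p.n - j) + 1) :
    (spliceB p j hj t hfwd).node ⟨m, hm2⟩ = t.node ⟨t.n - m, by omega⟩ := dif_pos hm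

lemma spliceB_node_ge (p : G.Walk v w) (j : ℕ) (hj : j ≤ p.n)
    (t : G.Walk (p.node ⟨j, by omega⟩) v) (hfwd : ∀ i, t.edge i = EdgeDir.fwd)
    (m : ℕ) (hm : ¬ (m < t.n)) (hm2 : m < t.n + (p.n - j) + 1) :
    (spliceB p j hj t hfwd).node ⟨m, hm2⟩ = p.node ⟨j + (m - t.n), by omega⟩ := dif_neg hm

lemma spliceB_node_le (p : G.Walk v w) (j : ℕ) (hj : j ≤ p.n)
    (t : G.Walk (p.node ⟨j, by omega⟩) v) (hfwd : ∀ i, t.edge i = EdgeDir.fwd)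
    (m : ℕ) (hm : m ≤ t.n) (hm2 : m < t.n + (p.n - j) + 1) :
    (spliceB p j hj t hfwd).node ⟨m, hm2⟩ = t.node ⟨t.n - m, by omega⟩ := by
  rcases Nat.lt_or_ge m t.n with h | h
  · exact spliceB_node_lt p j hj t hfwd m h hm2
  · have hmt : m = t.n := by omega
    rw [spliceB_node_ge p j hj t hfwd m (by omega) hm2]
    have e : p.node ⟨j + (m - t.n), by omega⟩ = p.node ⟨j, by omega⟩ :=
      congrArg p.node (by ext; simp; omega)
    rw [e]
    exact (t.first_eq.symm).trans
      (congrArg t.node (by ext; simp only [Fin.val_zero, Fin.val_mk]; omega))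

lemma spliceB_edge_lt (p : G.Walk v w) (j : ℕ) (hj : j ≤ p.n)
    (t : G.Walk (p.node ⟨j, by omega⟩) v) (hfwd : ∀ i, t.edge i = EdgeDir.fwd)
    (m : ℕ) (hm : m < t.n) (hm2 : m < t.n + (p.n - j)) :
    (spliceB p j hj t hfwd).edge ⟨m, hm2⟩ = EdgeDir.bwd := dif_pos hm

lemma spliceB_edge_ge (p : G.Walk v w) (j : ℕ) (hj : j ≤ p.n)
    (t : G.Walk (p.node ⟨j, by omega⟩) v) (hfwd : ∀ i, t.edge i = EdgeDir.fwd)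
    (m : ℕ) (hm : ¬ (m < t.n)) (hm2 : m < t.n + (p.n - j)) :
    (spliceB p j hj t hfwd).edge ⟨m, hm2⟩ = p.edge ⟨j + (m - t.n), by omega⟩ := dif_neg hm

lemma spliceB_open {C : Set α} (p : G.Walk v w) (hp : p.IsPath)
    (hv : v ∉ C) (hw : w ∉ C) (j : ℕ) (hj : j ≤ p.n)
    (t : G.Walk (p.node ⟨j, by omega⟩) v) (ht : t.IsPath)
    (hfwd : ∀ i, t.edge i = EdgeDir.fwd)
    (htC : ∀ m, t.node m ∉ C)
    (hcross : ∀ (m : ℕ) (hm : j < m) (hm2 : m ≤ p.n), ∀ m', p.node ⟨m, by omega⟩ ≠ t.node m')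
    (hcol : ∀ (i : ℕ) (h : i + 1 < p.n), j < i + 1 →
      p.IsColliderAt i h → p.node ⟨i + 1, by omega⟩ ∈ G.ancSet C)
    (hnc : ∀ (i : ℕ) (h : i + 1 < p.n), j < i + 1 → ¬ p.IsColliderAt i h →
      p.node ⟨i + 1, by omega⟩ ∈ C →
      ¬((p.edge ⟨i, by omega⟩ = .bwd ∧ p.node ⟨i, by omega⟩ ∉ G.scc (p.node ⟨i+1, by omega⟩)) ∨
        (p.edge ⟨i+1, h⟩ = .fwd ∧
          p.node ⟨i+2, by omega⟩ ∉ G.scc (p.node ⟨i+1, by omega⟩)))) :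
    ¬ G.sigmaSep v w C := by
  intro hsep
  set r := spliceB p j hj t hfwd with hr
  have hrn : r.n = t.n + (p.n - j) := rfl
  have hrP : r.IsPath := by
    intro m1 m2 hnode
    have hm1 : m1.1 < t.n + (p.n - j) + 1 := m1.2
    have hm2 : m2.1 < t.n + (p.n - j) + 1 := m2.2
    rcases Nat.lt_or_ge m1.1 t.n with b1 | b1 <;> rcases Nat.lt_or_ge m2.1 t.n with b2 | b2
    · have e1 : r.node m1 = t.node ⟨t.n - m1.1, by omega⟩ :=
        spliceB_node_lt p j hj t hfwd m1.1 b1 hm1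
      have e2 : r.node m2 = t.node ⟨t.n - m2.1, by omega⟩ :=
        spliceB_node_lt p j hj t hfwd m2.1 b2 hm2
      rw [e1, e2] at hnode
      have hft := ht hnode
      rw [Fin.mk.injEq] at hft
      exact Fin.ext (by omega)
    · -- m1 in t part, m2 in p part
      have e1 : r.node m1 = t.node ⟨t.n - m1.1, by omega⟩ :=
        spliceB_node_lt p j hj t hfwd m1.1 b1 hm1
      have e2 : r.node m2 = p.node ⟨j + (m2.1 - t.n), by omega⟩ :=
        spliceB_node_ge p j hj t hfwd m2.1 (by omega) hm2
      rw [e1, e2] at hnode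
      rcases Nat.eq_or_lt_of_le b2 with hb | hb
      · -- m2 = t.n : p.node j = t.node 0
        have e3 : p.node ⟨j + (m2.1 - t.n), by omega⟩ = t.node 0 := by
          refine (congrArg p.node (?_ : _ = (⟨j, by omega⟩ : Fin (p.n + 1)))).trans
            t.first_eq.symm
          ext; simp only [Fin.val_mk]; omega
        rw [e3] at hnode
        have hft := ht hnode.symm
        have : (0 : Fin (t.n + 1)).1 = t.n - m1.1 := congrArg Fin.val hft
        simp only [Fin.val_zero] at this
        omega
      · exact absurd hnode.symm (hcross (j + (m2.1 - t.n)) (by omega) (by omega) _)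
    · -- symmetric
      have e1 : r.node m1 = p.node ⟨j + (m1.1 - t.n), by omega⟩ :=
        spliceB_node_ge p j hj t hfwd m1.1 (by omega) hm1
      have e2 : r.node m2 = t.node ⟨t.n - m2.1, by omega⟩ :=
        spliceB_node_lt p j hj t hfwd m2.1 b2 hm2
      rw [e1, e2] at hnode
      rcases Nat.eq_or_lt_of_le b1 with hb | hb
      · have e3 : p.node ⟨j + (m1.1 - t.n), by omega⟩ = t.node 0 := by
          refine (congrArg p.node (?_ : _ = (⟨j, by omega⟩ : Fin (p.n + 1)))).trans
            t.first_eq.symm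
          ext; simp only [Fin.val_mk]; omega
        rw [e3] at hnode
        have hft := ht hnode
        have : (0 : Fin (t.n + 1)).1 = t.n - m2.1 := congrArg Fin.val hft
        simp only [Fin.val_zero] at this
        omega
      · exact absurd hnode (hcross (j + (m1.1 - t.n)) (by omega) (by omega) _)
    · have e1 : r.node m1 = p.node ⟨j + (m1.1 - t.n), by omega⟩ :=
        spliceB_node_ge p j hj t hfwd m1.1 (by omega) hm1
      have e2 : r.node m2 = p.node ⟨j + (m2.1 - t.n), by omega⟩ :=
        spliceB_node_ge p j hj t hfwd m2.1 (by omega) hm2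
      rw [e1, e2] at hnode
      have hpp := hp hnode
      rw [Fin.mk.injEq] at hpp
      exact Fin.ext (by omega)
  have hbl := hsep r hrP
  rcases hbl with hv' | hw' | ⟨i, h, hcolr, hanc⟩ | ⟨i, h, hncol, hmem, hdisj⟩
  · exact hv hv'
  · exact hw hw'
  · -- collider case
    have h' : i + 1 < t.n + (p.n - j) := h
    rcases Nat.lt_or_ge i t.n with hlt | hge
    · -- left edge is bwd: no arrowhead at its right end
      obtain ⟨c1, _⟩ := hcolr
      have e1 : r.edge ⟨i, by omega⟩ = EdgeDir.bwd :=
        spliceB_edge_lt p j hj t hfwd i (by omega) (by omega)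
      rw [e1] at c1
      rcases c1 with c1 | c1 <;> exact EdgeDir.noConfusion c1
    · -- collider in the p part
      have hPcol : p.IsColliderAt (j + (i - t.n)) (by omega) := by
        obtain ⟨c1, c2⟩ := hcolr
        have e1 : r.edge ⟨i, by omega⟩ = p.edge ⟨j + (i - t.n), by omega⟩ :=
          spliceB_edge_ge p j hj t hfwd i (by omega) (by omega)
        have e2 : r.edge ⟨i + 1, h⟩ = p.edge ⟨j + (i + 1 - t.n), by omega⟩ :=
          spliceB_edge_ge p j hj t hfwd (i + 1) (by omega) (by omega)
        rw [e1] at c1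
        rw [e2] at c2
        refine ⟨c1, ?_⟩
        have e3 : p.edge ⟨j + (i + 1 - t.n), by omega⟩ = p.edge ⟨j + (i - t.n) + 1, by omega⟩ :=
          congrArg p.edge (by ext; simp only [Fin.val_mk]; omega)
        rw [← e3]
        exact c2
      have hin := hcol (j + (i - t.n)) (by omega) (by omega) hPcol
      have e4 : r.node ⟨i + 1, by omega⟩ = p.node ⟨j + (i + 1 - t.n), by omega⟩ :=
        spliceB_node_ge p j hj t hfwd (i + 1) (by omega) (by omega)
      rw [e4] at hanc
      have e5 : p.node ⟨j + (i + 1 - t.n), by omega⟩ = p.node ⟨j + (i - t.n) + 1, by omega⟩ :=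
        congrArg p.node (by ext; simp only [Fin.val_mk]; omega)
      rw [e5] at hanc
      exact hanc hin
  · -- non-collider case
    have h' : i + 1 < t.n + (p.n - j) := h
    rcases Nat.lt_or_ge (i + 1) (t.n + 1) with hlt | hge
    · -- node i+1 is a t-node, not in C
      have e1 : r.node ⟨i + 1, by omega⟩ = t.node ⟨t.n - (i + 1), by omega⟩ :=
        spliceB_node_le p j hj t hfwd (i + 1) (by omega) (by omega)
      rw [e1] at hmem
      exact htC _ hmem
    · -- p part: transfer to hnc
      have hge' : t.n ≤ i := by omega
      set i' := j + (i - t.n) with hi'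
      have hb : i' + 1 < p.n := by omega
      have e0 : r.node ⟨i, by omega⟩ = p.node ⟨i', by omega⟩ :=
        spliceB_node_ge p j hj t hfwd i (by omega) (by omega)
      have e1 : r.node ⟨i + 1, by omega⟩ = p.node ⟨j + (i + 1 - t.n), by omega⟩ :=
        spliceB_node_ge p j hj t hfwd (i + 1) (by omega) (by omega)
      have e1' : p.node ⟨j + (i + 1 - t.n), by omega⟩ = p.node ⟨i' + 1, by omega⟩ :=
        congrArg p.node (by ext; simp only [Fin.val_mk]; omega)
      have e2 : r.node ⟨i + 2, by omega⟩ = p.node ⟨j + (i + 2 - t.n), by omega⟩ :=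
        spliceB_node_ge p j hj t hfwd (i + 2) (by omega) (by omega)
      have e2' : p.node ⟨j + (i + 2 - t.n), by omega⟩ = p.node ⟨i' + 2, by omega⟩ :=
        congrArg p.node (by ext; simp only [Fin.val_mk]; omega)
      have f1 : r.edge ⟨i, by omega⟩ = p.edge ⟨i', by omega⟩ :=
        spliceB_edge_ge p j hj t hfwd i (by omega) (by omega)
      have f2 : r.edge ⟨i + 1, h⟩ = p.edge ⟨j + (i + 1 - t.n), by omega⟩ :=
        spliceB_edge_ge p j hj t hfwd (i + 1) (by omega) (by omega)
      have f2' : p.edge ⟨j + (i + 1 - t.n), by omega⟩ = p.edge ⟨i' + 1, hb⟩ :=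
        congrArg p.edge (by ext; simp only [Fin.val_mk]; omega)
      have hPncol : ¬ p.IsColliderAt i' hb := by
        intro hc
        apply hncol
        obtain ⟨c1, c2⟩ := hc
        refine ⟨by rw [f1]; exact c1, ?_⟩
        rw [f2, f2']
        exact c2
      rw [e1, e1'] at hmem
      refine hnc i' hb (by omega) hPncol hmem ?_
      rcases hdisj with ⟨hd1, hd2⟩ | ⟨hd1, hd2⟩
      · rw [f1] at hd1
        rw [e0, e1, e1'] at hd2
        exact Or.inl ⟨hd1, hd2⟩
      · rw [f2, f2'] at hd1
        rw [e2, e2', e1, e1'] at hd2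
        exact Or.inr ⟨hd1, hd2⟩

lemma ancSet_mono {C C' : Set α} (h : C ⊆ C') : G.ancSet C ⊆ G.ancSet C' := by
  rintro x ⟨y, hy, hxy⟩
  exact ⟨y, h hy, hxy⟩

lemma fwd_anc {a b : α} (t : G.Walk a b) (hfwd : ∀ i, t.edge i = EdgeDir.fwd) :
    ∀ (k : ℕ) (hk : k < t.n + 1) (m : ℕ) (hm : m ≤ k),
      G.Anc (t.node ⟨m, by omega⟩) (t.node ⟨k, hk⟩) := by
  intro k
  induction k with
  | zero =>
    intro hk m hm
    have e : (⟨m, by omega⟩ : Fin (t.n + 1)) = ⟨0, hk⟩ := by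
      ext; simpa using (by omega : m = 0)
    rw [e]
    exact anc_refl G _
  | succ kk ih =>
    intro hk m hm
    rcases Nat.eq_or_lt_of_le hm with he | hlt
    · have e : (⟨m, by omega⟩ : Fin (t.n + 1)) = ⟨kk + 1, hk⟩ := by ext; simpa using he
      rw [e]
      exact anc_refl G _
    · have h1 : m ≤ kk := by omega
      have h2 : kk < t.n + 1 := by omega
      have step : G.dir (t.node ⟨kk, h2⟩) (t.node ⟨kk + 1, hk⟩) := by
        have hv := t.valid ⟨kk, by omega⟩
        rw [hfwd] at hv
        exact hv
      exact (ih h2 m h1).trans (anc_of_dir step)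

lemma exists_minP {P : ℕ → Prop} (hex : ∃ i, P i) :
    ∃ i, P i ∧ ∀ k, k < i → ¬ P k := by
  classical
  exact ⟨Nat.find hex, Nat.find_spec hex, fun k hk => Nat.find_min hex hk⟩

lemma exists_maxP {P : ℕ → Prop} (N : ℕ) (hex : ∃ i, P i) (hbound : ∀ i, P i → i < N) :
    ∃ i, P i ∧ ∀ k, i < k → ¬ P k := by
  classical
  obtain ⟨i0, h0⟩ := hex
  refine ⟨Nat.findGreatest P N, Nat.findGreatest_spec (le_of_lt (hbound i0 h0)) h0, ?_⟩
  intro k hk hPk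
  exact Nat.findGreatest_is_greatest hk (le_of_lt (hbound k hPk)) hPk

end DMG

open DMG

/-- edge orientations at `X` under the Extended Y-Structure
conditions: `X ∉ an({V, W} ∪ S)`, every edge between `X` and a node of
`{V, W} ∪ S` has an arrowhead at `X` (i.e. there is no directed edge out of `X`
into such a node), and neither `Y → X` nor `X ↔ Y` is in `G`. -/
theorem extended_y_structure_orientations
    {α : Type*} [Fintype α] (G : DMG α) (V W X Y : α) (S : Set α)
    (hVW : V ≠ W) (hVX : V ≠ X) (hVY : V ≠ Y)
    (hWX : W ≠ X) (hWY : W ≠ Y) (hXY : X ≠ Y)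
    (hVS : V ∉ S) (hWS : W ∉ S) (hXS : X ∉ S) (hYS : Y ∉ S)
    (hcover : ∀ a : α, a = V ∨ a = W ∨ a = X ∨ a = Y ∨ a ∈ S)
    (h1 : G.sigmaSep V Y ({X} ∪ S))
    (h2 : ¬ G.sigmaSep V Y S)
    (h3 : ¬ G.sigmaSep V W ({X} ∪ S))
    (h4 : G.sigmaSep V W S) :
    X ∉ G.ancSet ({V, W} ∪ S) ∧
    (∀ z, z ∈ ({V, W} : Set α) ∪ S → ¬ G.dir X z) ∧
    ¬ G.dir Y X ∧ ¬ G.bidir X Y := by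
  classical
  unfold DMG.sigmaSep at h2 h3
  push_neg at h2 h3
  obtain ⟨p, hpPath, hpOpen⟩ := h3
  obtain ⟨q, hqPath, hqOpen⟩ := h2
  -- openness facts for p with respect to {X} ∪ S
  have hpcolAnc : ∀ (i : ℕ) (h : i + 1 < p.n), p.IsColliderAt i h →
      p.node ⟨i + 1, by omega⟩ ∈ G.ancSet ({X} ∪ S) := by
    intro i h hc
    by_contra hnot
    exact hpOpen (Or.inr (Or.inr (Or.inl ⟨i, h, hc, hnot⟩)))
  have hpnc : ∀ (i : ℕ) (h : i + 1 < p.n), ¬ p.IsColliderAt i h →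
      p.node ⟨i + 1, by omega⟩ ∈ ({X} : Set α) ∪ S →
      ¬((p.edge ⟨i, by omega⟩ = .bwd ∧
          p.node ⟨i, by omega⟩ ∉ G.scc (p.node ⟨i + 1, by omega⟩)) ∨
        (p.edge ⟨i + 1, h⟩ = .fwd ∧
          p.node ⟨i + 2, by omega⟩ ∉ G.scc (p.node ⟨i + 1, by omega⟩))) :=
    fun i h hn hm hd => hpOpen (Or.inr (Or.inr (Or.inr ⟨i, h, hn, hm, hd⟩)))
  -- openness facts for q with respect to S
  have hqcolAnc : ∀ (i : ℕ) (h : i + 1 < q.n), q.IsColliderAt i h →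
      q.node ⟨i + 1, by omega⟩ ∈ G.ancSet S := by
    intro i h hc
    by_contra hnot
    exact hqOpen (Or.inr (Or.inr (Or.inl ⟨i, h, hc, hnot⟩)))
  -- the bad colliders of p
  have hBadEx : ∃ i, ∃ h0 : i + 1 < p.n, p.IsColliderAt i h0 ∧
      p.node ⟨i + 1, by omega⟩ ∉ G.ancSet S := by
    rcases h4 p hpPath with hv' | hw' | ⟨i, h, hc, hanc⟩ | ⟨i, h, hn, hm, hd⟩
    · exact absurd hv' hVS
    · exact absurd hw' hWS
    · exact ⟨i, h, hc, hanc⟩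
    · exact absurd (Or.inr (Or.inr (Or.inr ⟨i, h, hn, Set.mem_union_right _ hm, hd⟩))) hpOpen
  have hAncX : ∀ (i : ℕ) (h0 : i + 1 < p.n), p.IsColliderAt i h0 →
      p.node ⟨i + 1, by omega⟩ ∉ G.ancSet S → G.Anc (p.node ⟨i + 1, by omega⟩) X := by
    intro i h0 hc hnanc
    obtain ⟨y, hy, hanc⟩ := hpcolAnc i h0 hc
    rcases hy with hy | hy
    · rwa [Set.mem_singleton_iff.mp hy] at hanc
    · exact absurd ⟨y, hy, hanc⟩ hnanc
  obtain ⟨ib, hBadb⟩ := id hBadEx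
  have hXanS : X ∉ G.ancSet S := by
    intro hXin
    obtain ⟨h00, hc0, hnanc0⟩ := hBadb
    exact hnanc0 (mem_ancSet_of_anc (hAncX ib h00 hc0 hnanc0) hXin)
  -- Part 1 : X is not an ancestor of {V, W} ∪ S
  have hA : X ∉ G.ancSet ({V, W} ∪ S) := by
    rintro ⟨y, hy, hXy⟩
    rcases hy with hy | hyS
    swap
    · exact hXanS ⟨y, hyS, hXy⟩
    rcases hy with hyV | hy
    · -- y = V : backward splice
      rw [hyV] at hXy
      obtain ⟨i₂, hBad₂, hmax₂⟩ := exists_maxP p.n hBadEx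
        (fun i hi => by obtain ⟨h0, _, _⟩ := hi; omega)
      obtain ⟨h0₂, hc₂, hnanc₂⟩ := hBad₂
      have hc₂V : G.Anc (p.node ⟨i₂ + 1, by omega⟩) V :=
        (hAncX i₂ h0₂ hc₂ hnanc₂).trans hXy
      have hP'ex : ∃ m, ∃ hm : m ≤ p.n,
          G.Anc (p.node ⟨i₂ + 1, by omega⟩) (p.node ⟨m, by omega⟩) ∧
          G.Anc (p.node ⟨m, by omega⟩) V :=
        ⟨i₂ + 1, by omega, anc_refl G _, hc₂V⟩
      obtain ⟨j, hPj, hjmax⟩ := exists_maxP (p.n + 1) hP'ex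
        (fun m hm => by obtain ⟨h0, _, _⟩ := hm; omega)
      obtain ⟨hjle, hanc_cz, hanc_zV⟩ := hPj
      have hjge : i₂ + 1 ≤ j := by
        by_contra hcon
        exact hjmax (i₂ + 1) (by omega) ⟨by omega, anc_refl G _, hc₂V⟩
      have hzV : p.node ⟨j, by omega⟩ ≠ V := by
        intro he
        have hV0 : p.node ⟨0, by omega⟩ = V := p.first_eq
        have hee := hpPath (he.trans hV0.symm)
        rw [Fin.mk.injEq] at hee
        omega
      obtain ⟨t, htPath, htn, hfwd, hancT⟩ := exists_fwd_path hanc_zV hzV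
      refine spliceB_open p hpPath hVS hWS j hjle t htPath hfwd ?_ ?_ ?_ ?_ h4
      · -- tail nodes are not in S
        intro m hmem
        exact hnanc₂ (mem_ancSet_of_anc (hanc_cz.trans (hancT m)) (mem_ancSet_self hmem))
      · -- cross
        intro m hm hm2 m' heq
        refine hjmax m hm ⟨hm2, ?_, ?_⟩
        · rw [heq]
          exact hanc_cz.trans (hancT m')
        · rw [heq]
          have h5 := fwd_anc t hfwd t.n (by omega) m'.1 (by omega)
          have h6 : t.node ⟨t.n, by omega⟩ = V := t.last_eq
          rw [h6] at h5
          exact h5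
      · -- colliders after j are in ancSet S
        intro i h hij hc
        by_contra hnot
        exact hmax₂ i (by omega) ⟨h, hc, hnot⟩
      · -- non-colliders in S after j do not block
        intro i h hij hn hm hd
        exact hpnc i h hn (Set.mem_union_right _ hm) hd
    · -- y = W : forward splice
      rw [Set.mem_singleton_iff.mp hy] at hXy
      obtain ⟨i₁, hBad₁, hmin₁⟩ := exists_minP hBadEx
      obtain ⟨h0₁, hc₁, hnanc₁⟩ := hBad₁
      have hc₁W : G.Anc (p.node ⟨i₁ + 1, by omega⟩) W :=
        (hAncX i₁ h0₁ hc₁ hnanc₁).trans hXy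
      have hPex : ∃ m, ∃ hm : m ≤ p.n,
          G.Anc (p.node ⟨i₁ + 1, by omega⟩) (p.node ⟨m, by omega⟩) ∧
          G.Anc (p.node ⟨m, by omega⟩) W :=
        ⟨i₁ + 1, by omega, anc_refl G _, hc₁W⟩
      obtain ⟨j, hPj, hjmin⟩ := exists_minP hPex
      obtain ⟨hjle, hanc_cz, hanc_zW⟩ := hPj
      have hji₁ : j ≤ i₁ + 1 := by
        by_contra hcon
        exact hjmin (i₁ + 1) (by omega) ⟨by omega, anc_refl G _, hc₁W⟩
      have hjlt : j < p.n := by omega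
      have hzW : p.node ⟨j, by omega⟩ ≠ W := by
        intro he
        have hWn : p.node ⟨p.n, by omega⟩ = W := p.last_eq
        have hee := hpPath (he.trans hWn.symm)
        rw [Fin.mk.injEq] at hee
        omega
      obtain ⟨t, htPath, htn, hfwd, hancT⟩ := exists_fwd_path hanc_zW hzW
      refine spliceF_open p hpPath hVS hWS j hjle t htPath hfwd ?_ ?_ ?_ ?_ h4
      · intro m hmem
        exact hnanc₁ (mem_ancSet_of_anc (hanc_cz.trans (hancT m)) (mem_ancSet_self hmem))
      · intro m hm m' heq
        refine hjmin m hm ⟨by omega, ?_, ?_⟩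
        · rw [heq]
          exact hanc_cz.trans (hancT m')
        · rw [heq]
          have h5 := fwd_anc t hfwd t.n (by omega) m'.1 (by omega)
          have h6 : t.node ⟨t.n, by omega⟩ = W := t.last_eq
          rw [h6] at h5
          exact h5
      · intro i h hij hc
        by_contra hnot
        exact hmin₁ i (by omega) ⟨h, hc, hnot⟩
      · intro i h hij hn hm hd
        exact hpnc i h hn (Set.mem_union_right _ hm) hd
  have hVC : V ∉ ({X} : Set α) ∪ S := by
    rintro (h | h)
    · exact hVX (Set.mem_singleton_iff.mp h)
    · exact hVS h
  have hYC : Y ∉ ({X} : Set α) ∪ S := by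
    rintro (h | h)
    · exact hXY (Set.mem_singleton_iff.mp h).symm
    · exact hYS h
  have hYnode : q.node ⟨q.n, by omega⟩ = Y := q.last_eq
  -- the blocking of q given {X} ∪ S must be the non-collider X right before Y
  have key : ∃ (i : ℕ) (h2i : i + 1 < q.n), i + 2 = q.n ∧
      q.node ⟨i + 1, by omega⟩ = X ∧ q.edge ⟨i + 1, h2i⟩ = EdgeDir.fwd ∧
      ¬ G.Anc Y X ∧ (q.edge ⟨i, by omega⟩).headAtRight := by
    rcases h1 q hqPath with hv' | hy' | ⟨i, h, hc, hanc⟩ | ⟨i, h, hn, hm, hd⟩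
    · exact absurd hv' hVC
    · exact absurd hy' hYC
    · exact absurd (ancSet_mono Set.subset_union_right (hqcolAnc i h hc)) hanc
    · rcases hm with hmX | hmS
      swap
      · exact absurd (Or.inr (Or.inr (Or.inr ⟨i, h, hn, hmS, hd⟩))) hqOpen
      have hnX : q.node ⟨i + 1, by omega⟩ = X := Set.mem_singleton_iff.mp hmX
      -- a directed edge out of X along q cannot go to V, W, S, or X
      have noVWS : ∀ (m : ℕ) (hmq : m < q.n + 1), m ≠ i + 1 →
          G.dir X (q.node ⟨m, hmq⟩) → q.node ⟨m, hmq⟩ = Y := by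
        intro m hmq hne hdir
        rcases hcover (q.node ⟨m, hmq⟩) with ha | ha | ha | ha | ha
        · exact absurd ⟨_, Or.inl (Or.inl rfl), anc_of_dir (ha ▸ hdir)⟩ hA
        · exact absurd ⟨_, Or.inl (Or.inr rfl), anc_of_dir (ha ▸ hdir)⟩ hA
        · exfalso
          have hee := hqPath (ha.trans hnX.symm)
          rw [Fin.mk.injEq] at hee
          omega
        · exact ha
        · exact absurd ⟨_, Or.inr ha, anc_of_dir hdir⟩ hA
      rcases hd with ⟨hd1, hd2⟩ | ⟨hd1, hd2⟩
      · -- arrow out of X to the left : impossible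
        exfalso
        have hdir : G.dir (q.node ⟨i + 1, by omega⟩) (q.node ⟨i, by omega⟩) := by
          have hv := q.valid ⟨i, by omega⟩
          rw [hd1] at hv
          exact hv
        rw [hnX] at hdir
        have hYi := noVWS i (by omega) (by omega) hdir
        have hee := hqPath (hYi.trans hYnode.symm)
        rw [Fin.mk.injEq] at hee
        omega
      · -- arrow out of X to the right : must point at Y, the endpoint
        have hdir : G.dir (q.node ⟨i + 1, by omega⟩) (q.node ⟨i + 2, by omega⟩) := by
          have hv := q.valid ⟨i + 1, h⟩
          rw [hd1] at hv
          exact hv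
        rw [hnX] at hdir
        have hY2 : q.node ⟨i + 2, by omega⟩ = Y := noVWS (i + 2) (by omega) (by omega) hdir
        have hi2 : i + 2 = q.n := by
          have hee := hqPath (hY2.trans hYnode.symm)
          rw [Fin.mk.injEq] at hee
          omega
        refine ⟨i, h, hi2, hnX, hd1, ?_, ?_⟩
        · intro hAncYX
          rw [hnX, hY2] at hd2
          exact hd2 ⟨hAncYX, anc_of_dir (hY2 ▸ hdir)⟩
        · -- the edge before X has an arrowhead at X
          rcases hcase : q.edge ⟨i, by omega⟩ with _ | _ | _
          · exact Or.inl rfl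
          · exfalso
            have hdir2 : G.dir (q.node ⟨i + 1, by omega⟩) (q.node ⟨i, by omega⟩) := by
              have hv := q.valid ⟨i, by omega⟩
              rw [hcase] at hv
              exact hv
            rw [hnX] at hdir2
            have hYi := noVWS i (by omega) (by omega) hdir2
            have hee := hqPath (hYi.trans hYnode.symm)
            rw [Fin.mk.injEq] at hee
            omega
          · exact Or.inr rfl
  obtain ⟨i, h2i, hi2, hnX, hef, hnAncYX, hheadi⟩ := key
  refine ⟨hA, fun z hz hdir => hA ⟨z, hz, anc_of_dir hdir⟩,
    fun hd => hnAncYX (anc_of_dir hd), fun hbXY => ?_⟩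
  -- replace the final edge X → Y of q by X ↔ Y and contradict h1
  have hq''valid : ∀ (k : Fin q.n),
      G.StepValid (q.node k.castSucc) (if k.1 = i + 1 then EdgeDir.bi else q.edge k)
        (q.node k.succ) := by
    intro k
    by_cases hk : k.1 = i + 1
    · rw [if_pos hk]
      show G.bidir (q.node k.castSucc) (q.node k.succ)
      have e1 : q.node k.castSucc = X := by
        rw [← hnX]
        exact congrArg q.node (by ext; simpa using hk)
      have e2 : q.node k.succ = Y := by
        have e : k.succ = (⟨q.n, by omega⟩ : Fin (q.n + 1)) := by
          ext; simp only [Fin.val_succ]; omega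
        rw [e, hYnode]
      rw [e1, e2]
      exact hbXY
    · rw [if_neg hk]
      exact q.valid k
  set q'' : G.Walk V Y :=
    ⟨q.n, q.node, fun k => if k.1 = i + 1 then EdgeDir.bi else q.edge k,
      q.first_eq, q.last_eq, hq''valid⟩ with hq''def
  have hq''Path : q''.IsPath := hqPath
  have hq''edge_ne : ∀ (k : ℕ) (hk : k < q.n), k ≠ i + 1 →
      q''.edge ⟨k, hk⟩ = q.edge ⟨k, hk⟩ := fun k hk hne => if_neg hne
  have hq''edge_eq : ∀ (hk : i + 1 < q.n), q''.edge ⟨i + 1, hk⟩ = EdgeDir.bi :=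
    fun hk => if_pos rfl
  rcases h1 q'' hq''Path with hv' | hy' | ⟨k, hk, hc, hanc⟩ | ⟨k, hk, hn, hm, hd⟩
  · exact hVC hv'
  · exact hYC hy'
  · -- collider case for q''
    by_cases hke : k + 1 = i + 1
    · apply hanc
      have e : q''.node ⟨k + 1, by omega⟩ = X := by
        show q.node ⟨k + 1, by omega⟩ = X
        rw [← hnX]
        exact congrArg q.node (by ext; simpa using hke)
      rw [e]
      exact mem_ancSet_self (Or.inl rfl)
    · have hklt : k + 1 < i + 1 := by
        have : k + 1 < q.n := hk
        omega
      have hc' : q.IsColliderAt k (by omega) := by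
        obtain ⟨c1, c2⟩ := hc
        rw [hq''edge_ne k (by omega) (by omega)] at c1
        rw [hq''edge_ne (k + 1) (by omega) (by omega)] at c2
        exact ⟨c1, c2⟩
      apply hanc
      show q.node ⟨k + 1, by omega⟩ ∈ G.ancSet ({X} ∪ S)
      exact ancSet_mono Set.subset_union_right (hqcolAnc k (by omega) hc')
  · -- non-collider case for q''
    by_cases hke : k + 1 = i + 1
    · -- but X is a collider of q''
      apply hn
      constructor
      · have e : q''.edge ⟨k, by omega⟩ = q.edge ⟨k, by omega⟩ :=
          hq''edge_ne k (by omega) (by omega)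
        rw [e]
        have e2 : q.edge ⟨k, by omega⟩ = q.edge ⟨i, by omega⟩ :=
          congrArg q.edge (by ext; simpa using (by omega : k = i))
        rw [e2]
        exact hheadi
      · have e : q''.edge ⟨k + 1, hk⟩ = q''.edge ⟨i + 1, by omega⟩ :=
          congrArg q''.edge (by ext; simpa using hke)
        rw [e, hq''edge_eq]
        exact Or.inr rfl
    · have hklt : k + 1 < i + 1 := by
        have : k + 1 < q.n := hk
        omega
      rcases hm with hmX2 | hmS2
      · -- node would equal X, impossible by injectivity
        have e : q.node ⟨k + 1, by omega⟩ = q.node ⟨i + 1, by omega⟩ := by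
          rw [hnX]
          exact Set.mem_singleton_iff.mp hmX2
        have hee := hqPath e
        rw [Fin.mk.injEq] at hee
        omega
      · -- node in S : then q itself is blocked given S, contradiction
        apply hqOpen
        refine Or.inr (Or.inr (Or.inr ⟨k, hk, ?_, hmS2, ?_⟩))
        · intro hcq
          apply hn
          obtain ⟨c1, c2⟩ := hcq
          exact ⟨by rw [hq''edge_ne k (by omega) (by omega)]; exact c1,
            by rw [hq''edge_ne (k + 1) (by omega) (by omega)]; exact c2⟩
        · rcases hd with ⟨d1, d2⟩ | ⟨d1, d2⟩
          · left
            rw [hq''edge_ne k (by omega) (by omega)] at d1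
            exact ⟨d1, d2⟩
          · right
            rw [hq''edge_ne (k + 1) (by omega) (by omega)] at d1
            exact ⟨d1, d2⟩
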